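/- Let K be a field of characteristic zero and let P : K^n → K be a bisymmetric polynomial function of degree p ≥ 2 whose homogeneous component P_p of degree p does not depend on the variable x_j (i.e., the formal partial derivative ∂_{x_j} P_p is the zero polynomial). Then P does not depend on x_j (i.e., ∂_{x_j} P = 0). -/

import Mathlib

/-- A function `f : S^n → S` is bisymmetric if for every `n × n` matrix `X` over `S`,
applying `f` to the rows and then to the results equals applying `f` to the columns
and then to the results. -/
def Bisym {S : Type*} {n : ℕ} (f : (Fin n → S) → S) : Prop :=
  ∀ X : Fin n → Fin n → S,
    f (fun i => f (X i)) = f (fun j => f (fun i => X i j))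

namespace BisymAux

open MvPolynomial Polynomial

variable {K : Type*} [Field K] [CharZero K]

set_option linter.unusedSectionVars false




lemma coeff_pderiv {σ : Type*} (i : σ) (f : MvPolynomial σ K) (s : σ →₀ ℕ) :
    coeff s (pderiv i f) = ((s i : K) + 1) * coeff (s + Finsupp.single i 1) f := by
  classical
  induction f using MvPolynomial.induction_on' with
  | add f g hf hg => simp [map_add, hf, hg, mul_add]
  | monomial u b =>
    rw [pderiv_monomial, MvPolynomial.coeff_monomial, MvPolynomial.coeff_monomial]
    by_cases h : u = s + Finsupp.single i 1
    · subst h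
      have h1 : s + Finsupp.single i 1 - Finsupp.single i 1 = s := by
        ext k; simp
      rw [if_pos h1, if_pos rfl, Finsupp.add_apply, Finsupp.single_eq_same]
      push_cast
      ring
    · rw [if_neg h, mul_zero]
      by_cases h2 : u - Finsupp.single i 1 = s
      · rcases Nat.eq_zero_or_pos (u i) with h3 | h3
        · rw [if_pos h2]
          simp [h3]
        · exfalso
          apply h
          have hle : Finsupp.single i 1 ≤ u := Finsupp.single_le_iff.mpr h3
          rw [← h2, tsub_add_cancel_of_le hle]
      · rw [if_neg h2]






lemma mem_support_pderiv {σ : Type*} {i : σ} {f : MvPolynomial σ K} {s : σ →₀ ℕ}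
    (hs : s ∈ (pderiv i f).support) : s + Finsupp.single i 1 ∈ f.support := by
  rw [MvPolynomial.mem_support_iff] at hs ⊢
  intro h
  rw [coeff_pderiv, h, mul_zero] at hs
  exact hs rfl

lemma degree_sum (s : σ →₀ ℕ) : (s.sum fun _ e => e) = s.degree := rfl

lemma weight_one_single {σ : Type*} (i : σ) :
    (Finsupp.weight 1) (Finsupp.single i (1 : ℕ)) = 1 := by
  rw [Finsupp.weight_apply, Finsupp.sum_single_index] <;> simp

lemma degree_add_single {σ : Type*} (s : σ →₀ ℕ) (i : σ) :
    (s + Finsupp.single i 1).degree = s.degree + 1 := by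
  rw [Finsupp.degree_eq_weight_one, map_add]
  erw [weight_one_single]

lemma totalDegree_pderiv_le {σ : Type*} (i : σ) (f : MvPolynomial σ K) :
    (pderiv i f).totalDegree ≤ f.totalDegree - 1 := by
  apply Finset.sup_le
  intro s hs
  have h1 := le_totalDegree (mem_support_pderiv hs)
  have h2 : ((s + Finsupp.single i 1).sum fun _ e => e) = (s.sum fun _ e => e) + 1 := by
    rw [degree_sum, degree_sum]
    exact degree_add_single s i
  omega

lemma homogeneousComponent_totalDegree_ne_zero {σ : Type*} {f : MvPolynomial σ K} (hf : f ≠ 0) :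
    homogeneousComponent f.totalDegree f ≠ 0 := by
  obtain ⟨s, hs, hsup⟩ := Finset.exists_mem_eq_sup f.support
    (MvPolynomial.support_nonempty.mpr hf) (fun s => s.sum fun _ e => e)
  intro h
  have : coeff s (homogeneousComponent f.totalDegree f) = coeff s f := by
    rw [coeff_homogeneousComponent, if_pos]
    rw [← degree_sum, ← hsup]
    rfl
  rw [h, MvPolynomial.coeff_zero] at this
  exact MvPolynomial.mem_support_iff.mp hs this.symm

lemma totalDegree_sub_homogeneousComponent_le {σ : Type*} (f : MvPolynomial σ K) :
    (f - homogeneousComponent f.totalDegree f).totalDegree ≤ f.totalDegree - 1 := by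
  apply Finset.sup_le
  intro s hs
  rw [MvPolynomial.mem_support_iff, MvPolynomial.coeff_sub, coeff_homogeneousComponent] at hs
  by_cases h : s.degree = f.totalDegree
  · rw [if_pos h, sub_self] at hs
    exact absurd rfl hs
  · rw [if_neg h, sub_zero] at hs
    have := le_totalDegree (MvPolynomial.mem_support_iff.mpr hs)
    rw [degree_sum] at this ⊢
    omega

lemma IsHomogeneous.pderiv' {σ : Type*} {f : MvPolynomial σ K} {m : ℕ}
    (hf : f.IsHomogeneous m) (i : σ) : (pderiv i f).IsHomogeneous (m - 1) := by
  intro d hd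
  rw [coeff_pderiv] at hd
  have h2 : coeff (d + Finsupp.single i 1) f ≠ 0 := by
    intro h; rw [h, mul_zero] at hd; exact hd rfl
  have h3 := hf h2
  rw [← (show Finsupp.degree = Finsupp.weight (1 : σ → ℕ) from Finsupp.degree_eq_weight_one)] at h3 ⊢
  rw [degree_add_single] at h3
  omega

lemma eval_mul_left_of_isHomogeneous {σ : Type*} {f : MvPolynomial σ K} {m : ℕ}
    (hf : f.IsHomogeneous m) (r : K) (x : σ → K) :
    eval (fun i => r * x i) f = r ^ m * eval x f := by
  rw [as_sum f, map_sum, map_sum, Finset.mul_sum]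
  apply Finset.sum_congr rfl
  intro s hs
  rw [MvPolynomial.eval_monomial, MvPolynomial.eval_monomial]
  have hdeg : s.degree = m := by
    have := hf (MvPolynomial.mem_support_iff.mp hs)
    rwa [← (show Finsupp.degree = Finsupp.weight (1 : σ → ℕ) from Finsupp.degree_eq_weight_one)] at this
  have : (s.prod fun i e => (r * x i) ^ e)
      = (∏ i ∈ s.support, r ^ s i) * s.prod fun i e => x i ^ e := by
    rw [Finsupp.prod, Finsupp.prod, ← Finset.prod_mul_distrib]
    exact Finset.prod_congr rfl fun i _ => mul_pow _ _ _
  rw [this, Finset.prod_pow_eq_pow_sum]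
  have : ∑ i ∈ s.support, s i = m := hdeg ▸ rfl
  rw [this]
  ring





lemma coeff_prod_of_natDegree_le {ι : Type*} (t : Finset ι) (g : ι → Polynomial K) (a : ι → ℕ)
    (h : ∀ i ∈ t, (g i).natDegree ≤ a i) :
    (∏ i ∈ t, g i).coeff (∑ i ∈ t, a i) = ∏ i ∈ t, (g i).coeff (a i) := by
  classical
  induction t using Finset.induction_on with
  | empty => simp
  | insert i t hnotmem ih =>
    rw [Finset.prod_insert hnotmem, Finset.sum_insert hnotmem, Finset.prod_insert hnotmem]
    rw [Polynomial.coeff_mul_add_eq_of_natDegree_le (h i (Finset.mem_insert_self i t))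
      ((Polynomial.natDegree_prod_le _ _).trans (Finset.sum_le_sum
        (fun k hk => h k (Finset.mem_insert_of_mem hk))))]
    rw [ih (fun k hk => h k (Finset.mem_insert_of_mem hk))]


lemma natDegree_mv_aeval_le {n : ℕ} (δ : Fin n → Polynomial K) {m : ℕ}
    (hδ : ∀ i, (δ i).natDegree ≤ m) (f : MvPolynomial (Fin n) K) :
    (MvPolynomial.aeval δ f).natDegree ≤ f.totalDegree * m := by
  conv_lhs => rw [f.as_sum]
  rw [map_sum]
  apply Polynomial.natDegree_sum_le_of_forall_le
  intro s hs
  rw [MvPolynomial.aeval_monomial]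
  apply (Polynomial.natDegree_C_mul_le _ _).trans
  rw [Finsupp.prod]
  apply (Polynomial.natDegree_prod_le _ _).trans
  calc ∑ i ∈ s.support, (δ i ^ s i).natDegree
      ≤ ∑ i ∈ s.support, s i * m :=
        Finset.sum_le_sum fun i _ => Polynomial.natDegree_pow_le.trans
          (Nat.mul_le_mul_left _ (hδ i))
    _ = (∑ i ∈ s.support, s i) * m := by rw [Finset.sum_mul]
    _ ≤ f.totalDegree * m := Nat.mul_le_mul_right _ (MvPolynomial.le_totalDegree hs)

lemma coeff_mv_aeval_top {n : ℕ} (δ : Fin n → Polynomial K) {m e : ℕ} (hm : 0 < m)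
    (hδ : ∀ i, (δ i).natDegree ≤ m) (f : MvPolynomial (Fin n) K) (hf : f.totalDegree ≤ e) :
    (MvPolynomial.aeval δ f).coeff (e * m)
      = MvPolynomial.eval (fun i => (δ i).coeff m) (homogeneousComponent e f) := by
  classical
  conv_lhs => rw [f.as_sum]
  rw [map_sum, Polynomial.finset_sum_coeff, homogeneousComponent_apply, map_sum]
  rw [Finset.sum_filter]
  apply Finset.sum_congr rfl
  intro s hs
  have hsle : s.degree ≤ e := le_trans (MvPolynomial.le_totalDegree hs) hf
  by_cases h : s.degree = e
  · rw [if_pos h, MvPolynomial.aeval_monomial, MvPolynomial.eval_monomial]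
    have key : (s.prod fun i k => δ i ^ k).coeff (e * m)
        = s.prod fun i k => (δ i).coeff m ^ k := by
      have h1 : ∀ i ∈ s.support, (δ i ^ s i).natDegree ≤ s i * m := fun i _ =>
        Polynomial.natDegree_pow_le.trans (Nat.mul_le_mul_left _ (hδ i))
      have h2 : ∑ i ∈ s.support, s i * m = e * m := by
        rw [← Finset.sum_mul]
        congr 1
      rw [Finsupp.prod, ← h2, coeff_prod_of_natDegree_le _ _ _ h1, Finsupp.prod]
      exact Finset.prod_congr rfl fun i _ =>
        Polynomial.coeff_pow_of_natDegree_le (hδ i)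
    rw [Polynomial.algebraMap_eq, Polynomial.coeff_C_mul, key]
  · rw [if_neg h]
    apply Polynomial.coeff_eq_zero_of_natDegree_lt
    have h1 : s.degree < e := lt_of_le_of_ne hsle h
    rw [MvPolynomial.aeval_monomial]
    apply lt_of_le_of_lt (Polynomial.natDegree_C_mul_le _ _)
    have : (s.prod fun i k => δ i ^ k).natDegree ≤ s.degree * m := by
      rw [Finsupp.prod]
      apply (Polynomial.natDegree_prod_le _ _).trans
      calc ∑ i ∈ s.support, (δ i ^ s i).natDegree
          ≤ ∑ i ∈ s.support, s i * m :=
            Finset.sum_le_sum fun i _ => Polynomial.natDegree_pow_le.trans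
              (Nat.mul_le_mul_left _ (hδ i))
        _ = s.degree * m := by rw [← Finset.sum_mul]; rfl
    apply lt_of_le_of_lt this
    exact (Nat.mul_lt_mul_right hm).mpr h1

lemma eval_mv_aeval {σ τ : Type*} (x : τ → K) (g : σ → MvPolynomial τ K)
    (f : MvPolynomial σ K) :
    MvPolynomial.eval x (MvPolynomial.aeval g f)
      = MvPolynomial.eval (fun i => MvPolynomial.eval x (g i)) f := by
  induction f using MvPolynomial.induction_on with
  | C a => simp [MvPolynomial.algebraMap_eq]
  | add f g hf hg => rw [map_add, map_add, map_add, hf, hg]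
  | mul_X f i hf =>
    rw [map_mul, map_mul, map_mul, hf, MvPolynomial.aeval_X, MvPolynomial.eval_X]

lemma pderiv_mv_aeval {n : ℕ} {τ : Type*} (g : Fin n → MvPolynomial τ K) (t : τ)
    (f : MvPolynomial (Fin n) K) :
    pderiv t (MvPolynomial.aeval g f)
      = ∑ i, MvPolynomial.aeval g (pderiv i f) * pderiv t (g i) := by
  induction f using MvPolynomial.induction_on with
  | C a => simp [MvPolynomial.algebraMap_eq]
  | add f f' hf hf' =>
    simp only [map_add, hf, hf', add_mul, Finset.sum_add_distrib]
  | mul_X f i hf =>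
    rw [map_mul, MvPolynomial.aeval_X, pderiv_mul, hf]
    have : ∀ i' : Fin n,
        MvPolynomial.aeval g (pderiv i' (f * MvPolynomial.X i)) * pderiv t (g i')
        = (MvPolynomial.aeval g (pderiv i' f) * pderiv t (g i')) * g i
          + (if i' = i then MvPolynomial.aeval g f * pderiv t (g i) else 0) := by
      intro i'
      rw [pderiv_mul, MvPolynomial.pderiv_X]
      by_cases h : i' = i
      · subst h
        rw [if_pos rfl, Pi.single_eq_same]
        rw [map_add, map_mul, map_mul, MvPolynomial.aeval_X, map_one, mul_one]
        ring
      · rw [if_neg h, Pi.single_eq_of_ne (Ne.symm h)]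
        rw [map_add, map_mul, map_mul, MvPolynomial.aeval_X, map_zero, mul_zero, add_zero]
        ring
    rw [Finset.sum_congr rfl fun i' _ => this i']
    rw [Finset.sum_add_distrib, Finset.sum_ite_eq' Finset.univ i
      (fun _ => MvPolynomial.aeval g f * pderiv t (g i))]
    rw [if_pos (Finset.mem_univ i), Finset.sum_mul]





lemma eval_zero_on_pi : ∀ {m : ℕ} (S : Fin m → Set K), (∀ i, (S i).Infinite) →
    ∀ (f : MvPolynomial (Fin m) K),
    (∀ v : Fin m → K, (∀ i, v i ∈ S i) → MvPolynomial.eval v f = 0) → f = 0 := by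
  intro m
  induction m with
  | zero =>
    intro S hS f hf
    obtain ⟨c, rfl⟩ := MvPolynomial.C_surjective (Fin 0) f
    have := hf (fun i => i.elim0) (fun i => i.elim0)
    rw [MvPolynomial.eval_C] at this
    rw [this, map_zero]
  | succ m ih =>
    intro S hS f hf
    set F := MvPolynomial.finSuccEquiv K m f with hF
    have hcoeff : ∀ k, F.coeff k = 0 := by
      intro k
      apply ih (fun i => S i.succ) (fun i => hS i.succ)
      intro y hy
      have hmap : F.map (MvPolynomial.eval y) = 0 := by
        apply Polynomial.eq_zero_of_infinite_isRoot
        apply (hS 0).mono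
        intro x hx
        show Polynomial.IsRoot _ x
        rw [Polynomial.IsRoot, ← MvPolynomial.eval_eq_eval_mv_eval']
        apply hf
        intro i
        refine Fin.cases ?_ ?_ i
        · simpa using hx
        · intro k
          simpa using hy k
      have := congrArg (fun q => Polynomial.coeff q k) hmap
      simpa [Polynomial.coeff_map] using this
    have hF0 : F = 0 := Polynomial.ext fun k => by rw [hcoeff k, Polynomial.coeff_zero]
    have := (MvPolynomial.finSuccEquiv K m).injective
      (by rw [← hF, hF0, map_zero] : MvPolynomial.finSuccEquiv K m f
          = MvPolynomial.finSuccEquiv K m 0)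
    exact this

lemma infinite_pow_mul {c : K} (hc : c ≠ 0) {p : ℕ} (hp : 1 ≤ p) :
    {x : K | ∃ r : K, r ≠ 0 ∧ r ^ p * c = x}.Infinite := by
  intro hfin
  haveI : Finite ↥{x : K | ∃ r : K, r ≠ 0 ∧ r ^ p * c = x} := hfin.to_subtype
  haveI : Infinite ↥(({0} : Set K)ᶜ) :=
    Set.infinite_coe_iff.mpr ((Set.finite_singleton 0).infinite_compl)
  set φ : ↥(({0} : Set K)ᶜ) → ↥{x : K | ∃ r : K, r ≠ 0 ∧ r ^ p * c = x} :=
    fun r => ⟨r.1 ^ p * c, ⟨r.1, by intro h0; exact r.2 (by simp [h0]), rfl⟩⟩ with hφ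
  obtain ⟨y, hy⟩ := Finite.exists_infinite_fiber φ
  set q : Polynomial K := Polynomial.C c * Polynomial.X ^ p - Polynomial.C y.1 with hq
  have hq0 : q ≠ 0 := by
    intro h
    apply hc
    have h2 : q.coeff p = 0 := by rw [h, Polynomial.coeff_zero]
    rwa [hq, Polynomial.coeff_sub, Polynomial.coeff_C_mul, Polynomial.coeff_X_pow,
      if_pos rfl, mul_one, Polynomial.coeff_C,
      if_neg (Nat.one_le_iff_ne_zero.mp hp), sub_zero] at h2
  have hroot : ∀ r : ↥(φ ⁻¹' {y}), Polynomial.IsRoot q (r.1.1 : K) := by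
    intro r
    have h3 : (r.1.1 : K) ^ p * c = y.1 := by
      have := r.2
      rw [Set.mem_preimage, Set.mem_singleton_iff] at this
      exact congrArg Subtype.val this
    rw [Polynomial.IsRoot, hq]
    simp only [Polynomial.eval_sub, Polynomial.eval_mul, Polynomial.eval_C,
      Polynomial.eval_pow, Polynomial.eval_X]
    rw [mul_comm, h3, sub_self]
  haveI : Infinite ↥{x : K | Polynomial.IsRoot q x} :=
    Infinite.of_injective (fun r : ↥(φ ⁻¹' {y}) => (⟨r.1.1, hroot r⟩ : ↥{x : K | Polynomial.IsRoot q x}))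
      (by
        intro r s h
        simp only [Subtype.mk.injEq] at h
        exact Subtype.ext (Subtype.ext h))
  haveI := (Polynomial.finite_setOf_isRoot hq0).to_subtype
  exact not_finite ↥{x : K | Polynomial.IsRoot q x}


end BisymAux
open MvPolynomial BisymAux in
set_option maxHeartbeats 2000000 in
/-- If the top homogeneous component of a bisymmetric polynomial function of degree
`p ≥ 2` does not depend on the variable `x_j`, then neither does the function itself. -/
theorem bisym_essential_variables
    {K : Type*} [Field K] [CharZero K] {n p : ℕ}
    (P : MvPolynomial (Fin n) K)
    (hbi : Bisym fun x : Fin n → K => MvPolynomial.eval x P)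
    (hdeg : P.totalDegree = p) (hp : 2 ≤ p) (j : Fin n)
    (hj : MvPolynomial.pderiv j (MvPolynomial.homogeneousComponent p P) = 0) :
    MvPolynomial.pderiv j P = 0 := by
  classical
  by_contra hQ0
  have hP0 : P ≠ 0 := by
    intro h
    rw [h, totalDegree_zero] at hdeg
    omega
  set Q : MvPolynomial (Fin n) K := pderiv j P with hQdef
  set Pp : MvPolynomial (Fin n) K := homogeneousComponent p P with hPpdef
  have hPpH : Pp.IsHomogeneous p := homogeneousComponent_isHomogeneous p P
  have hPp0 : Pp ≠ 0 := by
    rw [hPpdef, ← hdeg]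
    exact homogeneousComponent_totalDegree_ne_zero hP0
  -- pick a variable on which `Pp` depends
  obtain ⟨a, ha⟩ : ∃ a : Fin n, pderiv a Pp ≠ 0 := by
    obtain ⟨s, hs⟩ := MvPolynomial.ne_zero_iff.mp hPp0
    have hdegs : s.degree = p := by
      rw [Finsupp.degree_eq_weight_one]
      exact hPpH hs
    obtain ⟨a, hsa⟩ : ∃ a, s a ≠ 0 := by
      by_contra hall
      push_neg at hall
      have h0 : s = 0 := Finsupp.ext fun a => hall a
      rw [h0, map_zero] at hdegs
      omega
    refine ⟨a, fun h => ?_⟩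
    have hco := coeff_pderiv a Pp (s - Finsupp.single a 1)
    have hle : Finsupp.single a 1 ≤ s :=
      Finsupp.single_le_iff.mpr (Nat.one_le_iff_ne_zero.mpr hsa)
    rw [tsub_add_cancel_of_le hle, h, MvPolynomial.coeff_zero] at hco
    have hfac := Nat.cast_add_one_ne_zero (R := K) ((s - Finsupp.single a 1 : Fin n →₀ ℕ) a)
    exact hs (by
      rcases mul_eq_zero.mp hco.symm with h' | h'
      · exact absurd h' hfac
      · exact h')
  -- degree bookkeeping
  have hDp : (pderiv a P).totalDegree ≤ p - 1 := by
    have := totalDegree_pderiv_le a P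
    rw [hdeg] at this
    exact this
  have hlowdeg : (P - Pp).totalDegree ≤ p - 1 := by
    have := totalDegree_sub_homogeneousComponent_le P
    rw [hdeg] at this
    exact this
  have hQlow : pderiv j (P - Pp) = Q := by
    rw [map_sub, hj, sub_zero]
  set d := Q.totalDegree with hd_def
  have hd : d ≤ p - 2 := by
    have h1 := totalDegree_pderiv_le j (P - Pp)
    rw [hQlow] at h1
    omega
  set Qd : MvPolynomial (Fin n) K := homogeneousComponent d Q with hQd_def
  have hQd0 : Qd ≠ 0 := homogeneousComponent_totalDegree_ne_zero hQ0
  have hQdH : Qd.IsHomogeneous d := homogeneousComponent_isHomogeneous d Q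
  set D : MvPolynomial (Fin n) K := pderiv a P with hDdef
  set E : MvPolynomial (Fin n) K := pderiv a Pp with hEdef
  have hEH : E.IsHomogeneous (p - 1) := IsHomogeneous.pderiv' hPpH a
  have hEtop : homogeneousComponent (p - 1) D = E := by
    have hsplit : D = E + pderiv a (P - Pp) := by
      rw [hEdef, hDdef, map_sub]
      ring
    rw [hsplit, map_add]
    have h2 : homogeneousComponent (p - 1) (pderiv a (P - Pp)) = 0 := by
      apply homogeneousComponent_eq_zero
      have := totalDegree_pderiv_le a (P - Pp)
      omega
    rw [h2, add_zero]
    rw [homogeneousComponent_of_mem ((mem_homogeneousSubmodule _ _).mpr hEH), if_pos rfl]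
  -- the bisymmetry identity as a polynomial identity
  set rows : Fin n → MvPolynomial (Fin n × Fin n) K :=
    fun i => rename (Prod.mk i) P with hrows
  set cols : Fin n → MvPolynomial (Fin n × Fin n) K :=
    fun k => rename (fun i => (i, k)) P with hcols
  have hLR : MvPolynomial.aeval rows P = MvPolynomial.aeval cols P := by
    apply MvPolynomial.funext
    intro x
    rw [eval_mv_aeval, eval_mv_aeval]
    have h1 : ∀ i, MvPolynomial.eval x (rows i)
        = MvPolynomial.eval (fun k => x (i, k)) P := fun i => by
      simp only [hrows]
      exact eval_rename_prod_mk x i P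
    have h2 : ∀ k, MvPolynomial.eval x (cols k)
        = MvPolynomial.eval (fun i => x (i, k)) P := fun k => by
      simp only [hcols]
      rw [eval_rename]
      exact rfl
    simp only [h1, h2]
    exact hbi (fun i k => x (i, k))
  -- differentiate the identity at the `(a, j)` entry
  have hrowderiv : ∀ i : Fin n,
      pderiv (a, j) (rows i) = if i = a then rename (Prod.mk a) Q else 0 := by
    intro i
    by_cases h : i = a
    · rw [if_pos h, h]
      simp only [hrows]
      exact pderiv_rename (f := Prod.mk a) (fun u v huv => by simpa using huv) j P
    · rw [if_neg h]
      apply pderiv_eq_zero_of_notMem_vars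
      intro hmem
      have := vars_rename (Prod.mk i) P hmem
      obtain ⟨k, _, hk⟩ := Finset.mem_image.mp this
      exact h (congrArg Prod.fst hk)
  have hcolderiv : ∀ k : Fin n,
      pderiv (a, j) (cols k) = if k = j then rename (fun i => (i, j)) D else 0 := by
    intro k
    by_cases h : k = j
    · rw [if_pos h, h]
      simp only [hcols]
      exact pderiv_rename (f := fun i => (i, j)) (fun u v huv => by simpa using huv) a P
    · rw [if_neg h]
      apply pderiv_eq_zero_of_notMem_vars
      intro hmem
      have := vars_rename (fun i => (i, k)) P hmem
      obtain ⟨i, _, hk⟩ := Finset.mem_image.mp this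
      exact h (congrArg Prod.snd hk)
  have hkey : MvPolynomial.aeval rows D * rename (Prod.mk a) Q
      = MvPolynomial.aeval cols Q * rename (fun i => (i, j)) D := by
    have h1 := congrArg (pderiv (a, j)) hLR
    rw [pderiv_mv_aeval, pderiv_mv_aeval] at h1
    rw [Finset.sum_eq_single a
        (fun b _ hb => by rw [hrowderiv b, if_neg hb, mul_zero])
        (fun hb => absurd (Finset.mem_univ a) hb),
      Finset.sum_eq_single j
        (fun b _ hb => by rw [hcolderiv b, if_neg hb, mul_zero])
        (fun hb => absurd (Finset.mem_univ j) hb)] at h1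
    rw [hrowderiv a, if_pos rfl, hcolderiv j, if_pos rfl] at h1
    exact h1
  -- specialize along lines through the origin
  have hpoint : ∀ v : Fin n → Fin n → K,
      MvPolynomial.eval (fun i => MvPolynomial.eval (v i) Pp) E
        * MvPolynomial.eval (v a) Qd = 0 := by
    intro v
    set φ : MvPolynomial (Fin n × Fin n) K →ₐ[K] Polynomial K :=
      MvPolynomial.aeval (fun q : Fin n × Fin n => Polynomial.C (v q.1 q.2) * Polynomial.X)
      with hφ
    have hcomp : ∀ (g : Fin n → MvPolynomial (Fin n × Fin n) K) (f : MvPolynomial (Fin n) K),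
        φ (MvPolynomial.aeval g f) = MvPolynomial.aeval (fun i => φ (g i)) f := by
      intro g f
      rw [← AlgHom.comp_apply, MvPolynomial.comp_aeval]
    set pol : (Fin n → K) → MvPolynomial (Fin n) K → Polynomial K :=
      fun w f => MvPolynomial.aeval (fun k => Polynomial.C (w k) * Polynomial.X) f with hpol
    have hφrow : ∀ i, φ (rows i) = pol (v i) P := by
      intro i
      simp only [hrows, hφ, hpol]
      rw [aeval_rename]
      exact rfl
    have hφcol : ∀ k, φ (cols k) = pol (fun i => v i k) P := by
      intro k
      simp only [hcols, hφ, hpol]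
      rw [aeval_rename]
      exact rfl
    have hφQ : φ (rename (Prod.mk a) Q) = pol (v a) Q := by
      simp only [hφ, hpol]
      rw [aeval_rename]
      exact rfl
    have hφD : φ (rename (fun i => (i, j)) D) = pol (fun i => v i j) D := by
      simp only [hφ, hpol]
      rw [aeval_rename]
      exact rfl
    have hid := congrArg φ hkey
    rw [map_mul, map_mul, hcomp, hcomp, hφQ, hφD] at hid
    simp only [hφrow, hφcol] at hid
    -- degree bounds for the specializations
    have hXdeg : ∀ w : Fin n → K, ∀ k : Fin n,
        (Polynomial.C (w k) * Polynomial.X).natDegree ≤ 1 :=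
      fun w k => (Polynomial.natDegree_C_mul_le _ _).trans Polynomial.natDegree_X_le
    have hpolP : ∀ w : Fin n → K, (pol w P).natDegree ≤ p := by
      intro w
      rw [hpol]
      have := natDegree_mv_aeval_le _ (hXdeg w) P
      rwa [hdeg, mul_one] at this
    have hpolPtop : ∀ w : Fin n → K, (pol w P).coeff p = MvPolynomial.eval w Pp := by
      intro w
      rw [hpol, hPpdef]
      have := coeff_mv_aeval_top _ one_pos (hXdeg w) P (le_of_eq hdeg)
      rw [mul_one] at this
      rw [this]
      have hfn : (fun k => (Polynomial.C (w k) * Polynomial.X).coeff 1) = w :=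
        funext fun k => by simp
      rw [hfn]
    have hpolQtop : ∀ w : Fin n → K, (pol w Q).coeff d = MvPolynomial.eval w Qd := by
      intro w
      rw [hpol, hQd_def]
      have := coeff_mv_aeval_top _ one_pos (hXdeg w) Q (le_refl d)
      rw [mul_one] at this
      rw [this]
      have hfn : (fun k => (Polynomial.C (w k) * Polynomial.X).coeff 1) = w :=
        funext fun k => by simp
      rw [hfn]
    have hpolQdeg : ∀ w : Fin n → K, (pol w Q).natDegree ≤ d := by
      intro w
      rw [hpol]
      have := natDegree_mv_aeval_le _ (hXdeg w) Q
      rwa [mul_one] at this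
    have hpolDdeg : ∀ w : Fin n → K, (pol w D).natDegree ≤ p - 1 := by
      intro w
      rw [hpol]
      have := natDegree_mv_aeval_le _ (hXdeg w) D
      rw [mul_one] at this
      exact this.trans hDp
    -- left-hand side: coefficient of degree (p-1)*p + d
    have hA_deg : (MvPolynomial.aeval (fun i => pol (v i) P) D).natDegree ≤ (p - 1) * p :=
      (natDegree_mv_aeval_le _ (fun i => hpolP (v i)) D).trans
        (Nat.mul_le_mul_right _ hDp)
    have hA_coeff : (MvPolynomial.aeval (fun i => pol (v i) P) D).coeff ((p - 1) * p)
        = MvPolynomial.eval (fun i => MvPolynomial.eval (v i) Pp) E := by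
      rw [coeff_mv_aeval_top _ (by omega : 0 < p) (fun i => hpolP (v i)) D hDp, hEtop]
      have : (fun i => (pol (v i) P).coeff p) = fun i => MvPolynomial.eval (v i) Pp :=
        funext fun i => hpolPtop (v i)
      rw [this]
    have hB_deg : (MvPolynomial.aeval (fun k => pol (fun i => v i k) P) Q).natDegree ≤ d * p :=
      natDegree_mv_aeval_le _ (fun k => hpolP _) Q
    have harith : d * p + (p - 1) < (p - 1) * p + d := by
      have h1 : d * p ≤ (p - 2) * p := Nat.mul_le_mul_right p hd
      have h2 : (p - 1) * p = (p - 2) * p + p := by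
        rw [show p - 1 = (p - 2) + 1 by omega, add_mul, one_mul]
      omega
    have hcoeffid := congrArg (fun q => Polynomial.coeff q ((p - 1) * p + d)) hid
    rw [Polynomial.coeff_mul_add_eq_of_natDegree_le hA_deg (hpolQdeg (v a)),
      hA_coeff, hpolQtop (v a)] at hcoeffid
    rw [Polynomial.coeff_eq_zero_of_natDegree_lt
      (lt_of_le_of_lt (Polynomial.natDegree_mul_le.trans
        (add_le_add hB_deg (hpolDdeg _))) harith)] at hcoeffid
    exact hcoeffid
  -- endgame: the factors are nonzero polynomials, contradiction
  have hPQ : Pp * Qd ≠ 0 := mul_ne_zero hPp0 hQd0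
  obtain ⟨w, hw⟩ : ∃ w : Fin n → K, MvPolynomial.eval w (Pp * Qd) ≠ 0 := by
    by_contra hall
    push_neg at hall
    exact hPQ (MvPolynomial.funext fun x => by rw [hall x, map_zero])
  rw [map_mul] at hw
  have hc : MvPolynomial.eval w Pp ≠ 0 := fun h => hw (by rw [h, zero_mul])
  have hqw : MvPolynomial.eval w Qd ≠ 0 := fun h => hw (by rw [h, mul_zero])
  set c := MvPolynomial.eval w Pp with hcdef
  set S : Fin n → Set K := fun _ => {x : K | ∃ r : K, r ≠ 0 ∧ r ^ p * c = x} with hSdef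
  have hSinf : ∀ i, (S i).Infinite := fun _ => infinite_pow_mul hc (by omega)
  have hEzero : E = 0 := by
    apply eval_zero_on_pi S hSinf
    intro y hy
    have hex : ∀ i : Fin n, ∃ u : Fin n → K, MvPolynomial.eval u Pp = y i := by
      intro i
      obtain ⟨r, hr0, hr⟩ := hy i
      exact ⟨fun k => r * w k, by
        rw [eval_mul_left_of_isHomogeneous hPpH, ← hcdef, hr]⟩
    choose u hu using hex
    obtain ⟨r, hr0, hr⟩ := hy a
    set v : Fin n → Fin n → K := fun i => if i = a then (fun k => r * w k) else u i with hv
    have h1 : (fun i => MvPolynomial.eval (v i) Pp) = y := by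
      funext i
      by_cases h : i = a
      · have hva : v i = fun k => r * w k := by rw [hv]; simp [h]
        rw [hva, eval_mul_left_of_isHomogeneous hPpH, ← hcdef, h]
        exact hr
      · have hvi : v i = u i := by rw [hv]; simp [h]
        rw [hvi]
        exact hu i
    have h2 : MvPolynomial.eval (v a) Qd ≠ 0 := by
      have hva : v a = fun k => r * w k := by rw [hv]; simp
      rw [hva, eval_mul_left_of_isHomogeneous hQdH]
      exact mul_ne_zero (pow_ne_zero d hr0) hqw
    have h3 := hpoint v
    rw [h1] at h3
    rcases mul_eq_zero.mp h3 with h | h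
    · exact h
    · exact absurd h h2
  exact ha hEzero
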